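/- Let G be a graph, let S ⊆ V(G) be such that G − S is bipartite, and let c : S → {0,1} be a proper 2-coloring of the induced subgraph G[S]. Then either c can be extended to a proper 2-coloring of all of G, or there exist a connected component C of G − S, vertices p, q ∈ N_G(C) ⊆ S, and a p–q path P all of whose internal vertices lie in V(G) \ S (and in fact in C), such that either P has an odd number of internal vertices and c(p) ≠ c(q), or P has an even number of internal vertices and c(p) = c(q). Moreover P is simple except possibly for p = q, in which case P is an odd cycle through p. -/

import Mathlib

set_option maxHeartbeats 1000000

variable {V : Type}

/-- The graph obtained from `G` by deleting the vertex set `S`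
(deleted vertices are kept as isolated vertices). -/
def gdelete (G : SimpleGraph V) (S : Set V) : SimpleGraph V where
  Adj u v := G.Adj u v ∧ u ∉ S ∧ v ∉ S
  symm := by constructor; intro u v h; exact ⟨h.1.symm, h.2.2, h.2.1⟩
  loopless := by constructor; intro v h; exact G.ne_of_adj h.1 rfl

/-- The subgraph of `G` induced by the vertex set `A`
(vertices outside `A` are kept as isolated vertices). -/
def grestrict (G : SimpleGraph V) (A : Set V) : SimpleGraph V := gdelete G Aᶜ

/-- The open neighborhood `N_G(C)` of a vertex set `C`. -/
def gnbhd (G : SimpleGraph V) (C : Set V) : Set V := {v | v ∉ C ∧ ∃ u ∈ C, G.Adj u v}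

/-- `C` is (the vertex set of) a connected component of the induced subgraph `G[A]`:
`C ⊆ A`, `C` is nonempty and connected, and `C` is closed under adjacency within `A`. -/
def IsCompOf (G : SimpleGraph V) (A C : Set V) : Prop :=
  C ⊆ A ∧ C.Nonempty ∧ (∀ u ∈ C, ∀ v ∈ C, (grestrict G C).Reachable u v) ∧
    ∀ u ∈ C, ∀ v ∈ A, G.Adj u v → v ∈ C

/-- The set of internal vertices of a walk `W : G.Walk p q`
(all support vertices except the endpoints `p` and `q`). -/
def walkInterior {G : SimpleGraph V} {p q : V} (W : G.Walk p q) : Set V :=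
  {v | v ∈ W.support ∧ v ≠ p ∧ v ≠ q}


/-- 2-coloring extension lemma: if `G − S` is bipartite and `c` properly
2-colors `G[S]`, then either `c` extends to a proper 2-coloring of all of `G`, or there
is a connected component `C` of `G − S`, vertices `p, q ∈ N_G(C) ⊆ S` and a `p`–`q` path
`P` with all internal vertices in `C`, such that `P` has an odd number of internal
vertices and `c(p) ≠ c(q)`, or an even number of internal vertices and `c(p) = c(q)`;
moreover `P` is simple except possibly `p = q`, in which case `P` is an odd cycle. -/
theorem stmt0 [Fintype V] (G : SimpleGraph V) (S : Set V)
    (hbip : (gdelete G S).Colorable 2) (c : V → Bool)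
    (hc : ∀ u ∈ S, ∀ v ∈ S, G.Adj u v → c u ≠ c v) :
    (∃ c' : V → Bool, (∀ v ∈ S, c' v = c v) ∧ ∀ u v : V, G.Adj u v → c' u ≠ c' v) ∨
    (∃ C : Set V, IsCompOf G Sᶜ C ∧ gnbhd G C ⊆ S ∧
      ∃ p q : V, p ∈ gnbhd G C ∧ q ∈ gnbhd G C ∧
        ∃ W : G.Walk p q,
          (∀ v ∈ walkInterior W, v ∈ C) ∧
          ((Odd (W.length - 1) ∧ c p ≠ c q) ∨ (Even (W.length - 1) ∧ c p = c q)) ∧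
          ((p ≠ q ∧ W.IsPath) ∨
            (∃ h : p = q, (W.copy rfl h.symm).IsCycle ∧ Odd W.length))) := by
  classical
  set H := gdelete G S with hH
  obtain ⟨col⟩ := hbip
  set f : V → Bool := fun v => decide ((col v : Fin 2).val = 1) with hf
  have hfadj : ∀ {u v : V}, H.Adj u v → f u ≠ f v := by
    intro u v h
    have h1 : (col u : Fin 2) ≠ col v := col.valid h
    have h2 : (col u : Fin 2).val ≠ (col v).val := fun h' => h1 (Fin.val_injective h')
    have hu := (col u).isLt
    have hv := (col v).isLt
    simp only [hf, ne_eq, decide_eq_decide]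
    omega
  -- parity along H-walks
  have parity : ∀ {u w : V} (P : H.Walk u w), (f u = f w ↔ Even P.length) := by
    intro u w P
    induction P with
    | nil => simp
    | @cons a x b h P ih =>
      have h1 := hfadj h
      simp only [SimpleGraph.Walk.length_cons, Nat.even_add_one, ← ih]
      revert h1
      cases (f a) <;> cases (f x) <;> cases (f b) <;> simp
  have supp_not_S : ∀ {v w : V}, v ∉ S → H.Reachable v w → w ∉ S := by
    intro v w hv hr
    obtain ⟨P⟩ := hr.symm
    cases P with
    | nil => exact hv
    | cons h _ => exact h.2.1
  by_cases hall : ∀ K : H.ConnectedComponent, (∃ v ∈ K.supp, v ∉ S) →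
      ∃ b : Bool, ∀ p ∈ S, ∀ u ∈ K.supp, G.Adj p u → xor b (f u) ≠ c p
  · -- extension exists
    left
    set ε : H.ConnectedComponent → Bool := fun K =>
      if h : ∃ v ∈ K.supp, v ∉ S then (hall K h).choose else false with hε
    refine ⟨fun v => if v ∈ S then c v else xor (ε (H.connectedComponentMk v)) (f v),
      fun v hv => by simp [hv], ?_⟩
    intro u v huv
    by_cases hu : u ∈ S <;> by_cases hv : v ∈ S
    · simpa [hu, hv] using hc u hu v hv huv
    · simp only [hu, hv, if_pos, if_neg, if_false, if_true]
      have hK : ∃ x ∈ (H.connectedComponentMk v).supp, x ∉ S :=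
        ⟨v, by simp [SimpleGraph.ConnectedComponent.mem_supp_iff], hv⟩
      have hεK : ε (H.connectedComponentMk v) = (hall _ hK).choose := dif_pos hK
      have := (hall _ hK).choose_spec u hu v
        (by simp [SimpleGraph.ConnectedComponent.mem_supp_iff]) huv
      rw [hεK]
      exact fun h => this h.symm
    · simp only [hu, hv, if_pos, if_neg, if_false, if_true]
      have hK : ∃ x ∈ (H.connectedComponentMk u).supp, x ∉ S :=
        ⟨u, by simp [SimpleGraph.ConnectedComponent.mem_supp_iff], hu⟩
      have hεK : ε (H.connectedComponentMk u) = (hall _ hK).choose := dif_pos hK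
      have := (hall _ hK).choose_spec v hv u
        (by simp [SimpleGraph.ConnectedComponent.mem_supp_iff]) huv.symm
      rw [hεK]
      exact this
    · have hadj : H.Adj u v := ⟨huv, hu, hv⟩
      have hcomp : H.connectedComponentMk u = H.connectedComponentMk v :=
        SimpleGraph.ConnectedComponent.sound hadj.reachable
      simp only [hu, hv, if_neg, if_false]
      rw [hcomp]
      have := hfadj hadj
      cases hb : ε (H.connectedComponentMk v) <;>
        revert this <;> cases (f u) <;> cases (f v) <;> simp
  · -- bad component exists
    right
    push_neg at hall
    obtain ⟨K, ⟨v0, hv0K, hv0S⟩, hbad⟩ := hall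
    set C : Set V := K.supp with hC
    have hmemC : ∀ {x : V}, x ∈ C ↔ H.connectedComponentMk x = K := by
      intro x; simp [hC, SimpleGraph.ConnectedComponent.mem_supp_iff]
    have hreachC : ∀ {x y : V}, x ∈ C → y ∈ C → H.Reachable x y := by
      intro x y hx hy
      exact SimpleGraph.ConnectedComponent.exact (by rw [hmemC.mp hx, hmemC.mp hy])
    have hCnotS : ∀ {x : V}, x ∈ C → x ∉ S := by
      intro x hx
      exact supp_not_S hv0S (hreachC (hmemC.mpr (hmemC.mp hv0K)) hx)
    have hclosed : ∀ {x y : V}, x ∈ C → y ∉ S → G.Adj x y → y ∈ C := by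
      intro x y hx hy hadj
      have : H.Adj x y := ⟨hadj, hCnotS hx, hy⟩
      rw [hmemC, ← SimpleGraph.ConnectedComponent.sound this.reachable, ← hmemC]
      exact hx
    -- support of an H-walk starting in C stays in C
    have supp_sub : ∀ {a b : V} (P : H.Walk a b), a ∈ C → ∀ x ∈ P.support, x ∈ C := by
      intro a b P
      induction P with
      | nil => intro ha x hx; simp at hx; rwa [hx]
      | @cons a y b h P ih =>
        intro ha x hx
        have hyC : y ∈ C := hclosed ha h.2.2 h.1
        rw [SimpleGraph.Walk.support_cons] at hx
        rcases List.mem_cons.mp hx with h' | h'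
        · rwa [h']
        · exact ih hyC x h'
    have hcomp : IsCompOf G Sᶜ C := by
      refine ⟨fun x hx => hCnotS hx, ⟨v0, hv0K⟩, ?_, ?_⟩
      · intro x hx y hy
        obtain ⟨P⟩ := hreachC hx hy
        clear hy
        induction P with
        | nil => exact SimpleGraph.Reachable.refl _
        | @cons a z b h P ih =>
          have hzC : z ∈ C := hclosed hx h.2.2 h.1
          have hadj : (grestrict G C).Adj a z :=
            ⟨h.1, by simp [hx], by simp [hzC]⟩
          exact hadj.reachable.trans (ih hzC)
      · intro x hx y hy hadj
        exact hclosed hx hy hadj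
    have hnbhd : gnbhd G C ⊆ S := by
      intro x hx
      by_contra hxS
      exact hx.1 (hclosed hx.2.choose_spec.1 hxS hx.2.choose_spec.2)
    obtain ⟨p, hpS, u, huK, hpu, h1⟩ := hbad false
    obtain ⟨q, hqS, w, hwK, hqw, h2⟩ := hbad true
    have huC : u ∈ C := huK
    have hwC : w ∈ C := hwK
    have h1' : f u = c p := by simpa using h1
    have h2' : (!f w) = c q := by simpa using h2
    have hpC : p ∉ C := fun h => hCnotS h hpS
    have hqC : q ∉ C := fun h => hCnotS h hqS
    refine ⟨C, hcomp, hnbhd, p, q, ⟨hpC, u, huC, hpu.symm⟩, ⟨hqC, w, hwC, hqw.symm⟩, ?_⟩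
    obtain ⟨P0⟩ := hreachC huC hwC
    set P : H.Walk u w := P0.bypass with hP
    have hPpath : P.IsPath := P0.bypass_isPath
    have hPsupC : ∀ x ∈ P.support, x ∈ C := fun x hx =>
      supp_sub P0 huC x (P0.support_bypass_subset hx)
    have hle : H ≤ G := fun _ _ h => h.1
    set P' : G.Walk u w := P.map (SimpleGraph.Hom.ofLE hle) with hP'
    have hid : ⇑(SimpleGraph.Hom.ofLE hle) = id := rfl
    have hsup : P'.support = P.support := by
      rw [hP', SimpleGraph.Walk.support_map, hid, List.map_id]
    have hlen : P'.length = P.length := SimpleGraph.Walk.length_map _ _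
    have hedges : P'.edges = P.edges := by
      rw [hP', SimpleGraph.Walk.edges_map, hid, Sym2.map_id, List.map_id]
    have hP'path : P'.IsPath :=
      SimpleGraph.Walk.map_isPath_of_injective (fun a b h => h) hPpath
    have hpP' : p ∉ P'.support := by
      rw [hsup]; exact fun h => hpC (hPsupC p h)
    have hqP' : q ∉ P'.support := by
      rw [hsup]; exact fun h => hqC (hPsupC q h)
    set W : G.Walk p q := SimpleGraph.Walk.cons hpu (P'.concat hqw.symm) with hW
    have hWlen : W.length = P.length + 2 := by
      simp [hW, hlen]
    have hWsupp : W.support = p :: (P'.support.concat q) := by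
      simp [hW]
    refine ⟨W, ?_, ?_⟩
    · -- interior in C
      intro x hx
      obtain ⟨hxs, hxp, hxq⟩ := hx
      rw [hWsupp] at hxs
      rcases List.mem_cons.mp hxs with h' | h'
      · exact absurd h' hxp
      · rw [List.concat_eq_append, List.mem_append, List.mem_singleton] at h'
        rcases h' with h'' | h''
        · exact hPsupC x (hsup ▸ h'')
        · exact absurd h'' hxq
    · have hpar := parity P
      have hconcatpath : (P'.concat hqw.symm).IsPath := by
        rw [SimpleGraph.Walk.isPath_def, SimpleGraph.Walk.support_concat,
          List.nodup_append]
        refine ⟨hP'path.support_nodup, List.nodup_singleton q, ?_⟩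
        intro a ha b hb
        rw [List.mem_singleton] at hb
        subst hb
        exact fun h => hqP' (h ▸ ha)
      have hpathW : p ≠ q → W.IsPath := by
        intro hpq
        rw [hW, SimpleGraph.Walk.cons_isPath_iff]
        refine ⟨hconcatpath, ?_⟩
        rw [SimpleGraph.Walk.support_concat]
        simp only [List.mem_append, List.mem_singleton]
        rintro (h' | h')
        · exact hpP' h'
        · exact hpq h'
      by_cases hfu : f u = f w
      · -- c p ≠ c q, odd interior, path case
        have hev : Even P.length := hpar.mp hfu
        have hcpq : c p ≠ c q := by
          rw [← h1', ← h2', hfu]; cases (f w) <;> simp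
        have hpq : p ≠ q := fun h => hcpq (h ▸ rfl)
        refine ⟨Or.inl ⟨?_, hcpq⟩, Or.inl ⟨hpq, hpathW hpq⟩⟩
        rw [hWlen]
        obtain ⟨k, hk⟩ := hev; exact ⟨k, by omega⟩
      · -- f u ≠ f w
        have hodd : Odd P.length := Nat.not_even_iff_odd.mp (fun h => hfu (hpar.mpr h))
        have hcpq : c p = c q := by
          rw [← h1', ← h2']
          revert hfu; cases (f u) <;> cases (f w) <;> simp
        have huw : u ≠ w := fun h => hfu (h ▸ rfl)
        obtain ⟨k, hk⟩ := hodd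
        refine ⟨Or.inr ⟨by rw [hWlen]; exact ⟨k + 1, by omega⟩, hcpq⟩, ?_⟩
        by_cases hpq : p = q
        · -- odd cycle
          refine Or.inr ⟨hpq, ?_, by rw [hWlen]; exact ⟨k + 1, by omega⟩⟩
          subst hpq
          rw [SimpleGraph.Walk.copy_rfl_rfl, hW, SimpleGraph.Walk.cons_isCycle_iff]
          refine ⟨hconcatpath, ?_⟩
          rw [SimpleGraph.Walk.edges_concat, List.concat_eq_append]
          simp only [List.mem_append, List.mem_singleton]
          rintro (h' | h')
          · exact hpP' (SimpleGraph.Walk.fst_mem_support_of_mem_edges _ h')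
          · rw [Sym2.eq_iff] at h'
            rcases h' with ⟨ha, hb⟩ | ⟨ha, hb⟩
            · exact hpC (ha ▸ hwC)
            · exact huw hb
        · exact Or.inl ⟨hpq, hpathW hpq⟩
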